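/- Let φ:(0,∞)→(0,∞) be C¹ and let Φ(t)=∫₀^{|t|} sφ(s)ds. Fix 1<q<p. If the map t ↦ ((2−q)φ(t)+φ'(t)t)/t^{p−2} is strictly decreasing on (0,∞), then the map t ↦ (φ(t)t² − qΦ(t))/t^p is strictly decreasing on (0,∞). -/

import Mathlib

open Set Filter MeasureTheory Real


/-- If `t ↦ ((2-q)φ(t) + φ'(t)t)/t^{p-2}` is strictly decreasing on `(0,∞)`,
then `t ↦ (φ(t)t² - q Φ(t))/t^p` is strictly decreasing on `(0,∞)`, where
`Φ(t) = ∫₀^{|t|} s φ(s) ds` and `1 < q < p`. -/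
theorem stmt1 (φ φ' Φ : ℝ → ℝ) (q p : ℝ)
    (hq : 1 < q) (hqp : q < p)
    (hφpos : ∀ t > 0, 0 < φ t)
    (hderiv : ∀ t > 0, HasDerivAt φ (φ' t) t)
    (hzero : Filter.Tendsto (fun t => t * φ t) (nhdsWithin 0 (Set.Ioi 0)) (nhds 0))
    (hΦ : ∀ t : ℝ, Φ t = ∫ s in (0 : ℝ)..|t|, s * φ s)
    (hdec : StrictAntiOn (fun t => ((2 - q) * φ t + φ' t * t) / t ^ (p - 2)) (Set.Ioi 0)) :
    StrictAntiOn (fun t => (φ t * t ^ 2 - q * Φ t) / t ^ p) (Set.Ioi 0) := by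
  have hp0 : (0:ℝ) < p := lt_trans (lt_trans one_pos hq) hqp
  set f : ℝ → ℝ := fun s => s * φ s with hfdef
  set H : ℝ → ℝ := fun t => ((2 - q) * φ t + φ' t * t) / t ^ (p - 2) with hHdef
  set N : ℝ → ℝ := fun t => φ t * t ^ 2 - q * Φ t with hNdef
  have hφc : ∀ t ∈ Ioi (0:ℝ), ContinuousAt φ t := fun t ht => (hderiv t ht).continuousAt
  have hfc : ContinuousOn f (Ioi 0) := fun t ht =>
    (continuousAt_id.mul (hφc t ht)).continuousWithinAt
  -- bound f near 0
  obtain ⟨δ, hδ, hδb⟩ : ∃ δ ∈ Ioi (0:ℝ), Ioc (0:ℝ) δ ⊆ {s | |f s| ≤ 1} := by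
    rw [← mem_nhdsGT_iff_exists_Ioc_subset]
    have h1 : ∀ᶠ x in nhds (0:ℝ), |x| ≤ 1 := by
      filter_upwards [Metric.closedBall_mem_nhds (0:ℝ) one_pos] with x hx
      simpa [Real.dist_eq] using hx
    exact hzero.eventually h1
  -- integrability
  have hint : ∀ t > 0, IntervalIntegrable f volume 0 t := by
    intro t ht
    set c := min δ t with hc
    have hc0 : 0 < c := lt_min hδ ht
    have h1 : IntervalIntegrable f volume 0 c := by
      rw [intervalIntegrable_iff, uIoc_of_le hc0.le]
      refine Integrable.mono' (g := fun _ => (1:ℝ))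
        (integrableOn_const measure_Ioc_lt_top.ne)
        ((hfc.mono (fun s hs => hs.1)).aestronglyMeasurable measurableSet_Ioc) ?_
      rw [ae_restrict_iff' measurableSet_Ioc]
      filter_upwards with s hs
      exact hδb ⟨hs.1, hs.2.trans (min_le_left _ _)⟩
    have h2 : IntervalIntegrable f volume c t := by
      apply ContinuousOn.intervalIntegrable
      apply hfc.mono
      rw [uIcc_of_le (min_le_right _ _)]
      exact fun s hs => lt_of_lt_of_le hc0 hs.1
    exact h1.trans h2
  -- derivative of Φ
  have hΦd : ∀ t > 0, HasDerivAt Φ (f t) t := by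
    intro t ht
    have h1 : HasDerivAt (fun x => ∫ s in (0:ℝ)..x, f s) (f t) t :=
      intervalIntegral.integral_hasDerivAt_right (hint t ht)
        (hfc.stronglyMeasurableAtFilter isOpen_Ioi t ht)
        (hfc.continuousAt (isOpen_Ioi.mem_nhds ht))
    apply h1.congr_of_eventuallyEq
    filter_upwards [isOpen_Ioi.mem_nhds ht] with x hx
    rw [hΦ x, abs_of_pos hx]
  -- Φ → 0 at 0+
  have hΦ0 : Tendsto Φ (nhdsWithin 0 (Ioi 0)) (nhds 0) := by
    apply squeeze_zero_norm' (a := fun s => s)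
    · filter_upwards [Ioc_mem_nhdsGT_of_mem ⟨le_refl (0:ℝ), hδ⟩] with s hs
      rw [hΦ s, abs_of_pos hs.1]
      calc ‖∫ u in (0:ℝ)..s, f u‖ ≤ 1 * |s - 0| := by
            apply intervalIntegral.norm_integral_le_of_norm_le_const
            intro x hx
            rw [uIoc_of_le hs.1.le] at hx
            exact hδb ⟨hx.1, hx.2.trans hs.2⟩
        _ = s := by rw [sub_zero, abs_of_pos hs.1]; ring
    · exact tendsto_id.mono_left nhdsWithin_le_nhds
  -- derivative of N
  have hNd : ∀ t > 0, HasDerivAt N (H t * t ^ (p - 1)) t := by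
    intro t ht
    have h1 : HasDerivAt (fun x => φ x * x ^ 2) (φ' t * t ^ 2 + φ t * (2 * t ^ 1)) t :=
      (hderiv t ht).mul (hasDerivAt_pow 2 t)
    have h2 : HasDerivAt N (φ' t * t ^ 2 + φ t * (2 * t ^ 1) - q * f t) t :=
      h1.sub ((hΦd t ht).const_mul q)
    convert h2 using 1
    have htp : (t : ℝ) ^ (p - 2) ≠ 0 := (Real.rpow_pos_of_pos ht _).ne'
    have htp1 : t ^ (p - 1) = t ^ (p - 2) * t := by
      rw [show p - 1 = (p - 2) + 1 by ring, Real.rpow_add ht, Real.rpow_one]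
    rw [hHdef]; simp only []
    rw [htp1]
    field_simp
    ring
  -- N → 0 at 0+
  have hN0 : Tendsto N (nhdsWithin 0 (Ioi 0)) (nhds 0) := by
    have h1 : Tendsto (fun s : ℝ => φ s * s ^ 2) (nhdsWithin 0 (Ioi 0)) (nhds 0) := by
      have := hzero.mul (tendsto_id.mono_left (nhdsWithin_le_nhds (a := (0:ℝ))))
      simp only [mul_zero] at this
      exact this.congr (fun s => by simp [hfdef]; ring)
    have := h1.sub (hΦ0.const_mul q)
    simpa using this
  -- t^p → 0 at 0+
  have hpow0 : Tendsto (fun s : ℝ => s ^ p) (nhdsWithin 0 (Ioi 0)) (nhds 0) := by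
    have := (Real.continuousAt_rpow_const 0 p (Or.inr hp0.le)).continuousWithinAt
      (s := Ioi (0:ℝ))
    rw [ContinuousWithinAt, Real.zero_rpow hp0.ne'] at this
    exact this
  -- key inequality : H t * t^p < p * N t
  have key : ∀ t > 0, H t * t ^ p < p * N t := by
    intro t ht
    set M : ℝ → ℝ := fun s => N s - H t * s ^ p / p with hMdef
    have hMd : ∀ s > 0, HasDerivAt M ((H s - H t) * s ^ (p - 1)) s := by
      intro s hs
      have h1 : HasDerivAt (fun x : ℝ => H t * x ^ p / p) (H t * (p * s ^ (p - 1)) / p) s :=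
        ((Real.hasDerivAt_rpow_const (Or.inl hs.ne')).const_mul (H t)).div_const p
      refine ((hNd s hs).sub h1).congr_deriv ?_
      rw [mul_div_assoc, mul_div_cancel_left₀ _ hp0.ne']
      ring
    have hMmono : StrictMonoOn M (Ioc 0 t) := by
      apply strictMonoOn_of_deriv_pos (convex_Ioc 0 t)
      · exact fun s hs => (hMd s hs.1).continuousAt.continuousWithinAt
      · intro s hs
        rw [interior_Ioc] at hs
        rw [(hMd s hs.1).deriv]
        exact mul_pos (sub_pos.mpr (hdec hs.1 ht hs.2)) (Real.rpow_pos_of_pos hs.1 _)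
    have hM0 : Tendsto M (nhdsWithin 0 (Ioi 0)) (nhds 0) := by
      have := hN0.sub ((hpow0.const_mul (H t)).div_const p)
      simpa using this
    have hhalf : 0 < t / 2 := half_pos ht
    have hM2 : 0 ≤ M (t / 2) := by
      apply le_of_tendsto hM0
      filter_upwards [Ioo_mem_nhdsGT_of_mem ⟨le_refl (0:ℝ), hhalf⟩] with s hs
      exact (hMmono ⟨hs.1, hs.2.le.trans (by linarith)⟩ ⟨hhalf, by linarith⟩ hs.2).le
    have hMt : 0 < M t := lt_of_le_of_lt hM2
      (hMmono ⟨hhalf, by linarith⟩ ⟨ht, le_refl t⟩ (by linarith))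
    have hMt' : 0 < N t - H t * t ^ p / p := hMt
    have : H t * t ^ p / p < N t := by linarith
    calc H t * t ^ p = p * (H t * t ^ p / p) := by field_simp
      _ < p * N t := by exact mul_lt_mul_of_pos_left this hp0
  -- conclude
  apply strictAntiOn_of_deriv_neg (convex_Ioi 0)
  · intro t ht
    have h1 : HasDerivAt (fun t => N t / t ^ p)
        ((H t * t ^ (p - 1) * t ^ p - N t * (p * t ^ (p - 1))) / (t ^ p) ^ 2) t :=
      (hNd t ht).div (Real.hasDerivAt_rpow_const (Or.inl (ne_of_gt ht)))
        (Real.rpow_pos_of_pos ht _).ne'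
    exact h1.continuousAt.continuousWithinAt
  · intro t ht
    rw [interior_Ioi] at ht
    have h1 : HasDerivAt (fun t => N t / t ^ p)
        ((H t * t ^ (p - 1) * t ^ p - N t * (p * t ^ (p - 1))) / (t ^ p) ^ 2) t :=
      (hNd t ht).div (Real.hasDerivAt_rpow_const (Or.inl (ne_of_gt ht)))
        (Real.rpow_pos_of_pos ht _).ne'
    have heq : (fun t => (φ t * t ^ 2 - q * Φ t) / t ^ p) = fun t => N t / t ^ p := rfl
    rw [heq, h1.deriv]
    apply div_neg_of_neg_of_pos
    · have : H t * t ^ (p - 1) * t ^ p - N t * (p * t ^ (p - 1))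
          = t ^ (p - 1) * (H t * t ^ p - p * N t) := by ring
      rw [this]
      exact mul_neg_of_pos_of_neg (Real.rpow_pos_of_pos ht _)
        (sub_neg.mpr (key t ht))
    · exact pow_pos (Real.rpow_pos_of_pos ht _) 2
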